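/- For c, p, q in [0,1], it holds that 2·c·max(c, 1 − max(p,q))·(p − q)² ≤ d(c·p, c·q). -/

import Mathlib

open scoped BigOperators

/-- Bernoulli KL divergence `d(p,q)` with continuous extension to the boundary:
`⊤` when `q ∈ {0,1}` and `p ≠ q` there. -/
noncomputable def klBer (p q : ℝ) : EReal :=
  if (q = 0 ∧ p ≠ 0) ∨ (q = 1 ∧ p ≠ 1) then ⊤
  else ((p * Real.log (p / q) + (1 - p) * Real.log ((1 - p) / (1 - q)) : ℝ) : EReal)

/-- Real-valued Bernoulli KL divergence formula (valid where finite). -/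
noncomputable def klBerR (p q : ℝ) : ℝ :=
  p * Real.log (p / q) + (1 - p) * Real.log ((1 - p) / (1 - q))

open Real Set

noncomputable def Fkl (b : ℝ) : ℝ → ℝ := fun x =>
  x * log x - x * log b + ((1 - x) * log (1 - x) - (1 - x) * log (1 - b))

lemma klBerR_eq (a b : ℝ) (hb0 : b ≠ 0) (hb1 : b ≠ 1) : klBerR a b = Fkl b a := by
  unfold klBerR Fkl
  have h1 : a * log (a / b) = a * log a - a * log b := by
    rcases eq_or_ne a 0 with h | h
    · simp [h]
    · rw [log_div h hb0]; ring
  have h2 : (1 - a) * log ((1 - a) / (1 - b)) = (1 - a) * log (1 - a) - (1 - a) * log (1 - b) := by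
    rcases eq_or_ne a 1 with h | h
    · simp [h]
    · rw [log_div (by intro hh; apply h; linarith) (by intro hh; apply hb1; linarith)]; ring
  rw [h1, h2]

lemma Fkl_cont (b : ℝ) : Continuous (Fkl b) := by
  unfold Fkl
  exact (Real.continuous_mul_log.sub (continuous_id.mul continuous_const)).add
    ((Real.continuous_mul_log.comp (continuous_const.sub continuous_id)).sub
      ((continuous_const.sub continuous_id).mul continuous_const))

lemma one_sub_hasDerivAt (x : ℝ) : HasDerivAt (fun y : ℝ => 1 - y) (-1) x := by
  simpa using (hasDerivAt_id x).const_sub (1:ℝ)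

lemma Fkl_deriv (b x : ℝ) (hx0 : 0 < x) (hx1 : x < 1) :
    HasDerivAt (Fkl b) (log x - log (1 - x) - log b + log (1 - b)) x := by
  have h1 : HasDerivAt (fun y : ℝ => y * log y) (log x + 1) x :=
    Real.hasDerivAt_mul_log hx0.ne'
  have h2 : HasDerivAt (fun y : ℝ => (1 - y) * log (1 - y)) (-(log (1 - x) + 1)) x := by
    have := (Real.hasDerivAt_mul_log (x := 1 - x) (by linarith)).comp x (one_sub_hasDerivAt x)
    refine this.congr_deriv ?_
    ring
  have h3 : HasDerivAt (fun y : ℝ => y * log b) (log b) x := by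
    simpa using (hasDerivAt_id x).mul_const (log b)
  have h4 : HasDerivAt (fun y : ℝ => (1 - y) * log (1 - b)) (-log (1 - b)) x := by
    simpa using (one_sub_hasDerivAt x).mul_const (log (1 - b))
  have := (h1.sub h3).add (h2.sub h4)
  refine this.congr_deriv ?_
  ring

lemma psi_deriv (lam x : ℝ) (hx0 : 0 < x) (hx1 : x < 1) :
    HasDerivAt (fun y : ℝ => log y - log (1 - y) - lam * y) (1 / x + 1 / (1 - x) - lam) x := by
  have h1 := Real.hasDerivAt_log hx0.ne'
  have h2 : HasDerivAt (fun y : ℝ => log (1 - y)) ((1 - x)⁻¹ * (-1)) x :=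
    (Real.hasDerivAt_log (by intro h; nlinarith : (1 - x) ≠ 0)).comp x (one_sub_hasDerivAt x)
  have h3 : HasDerivAt (fun y : ℝ => lam * y) lam x := by
    simpa using (hasDerivAt_id x).const_mul lam
  have := (h1.sub h2).sub h3
  refine this.congr_deriv ?_
  simp only [one_div]
  ring

lemma psi_mono (lam l r : ℝ) (hl : 0 < l) (hr : r < 1)
    (hb : ∀ x ∈ Icc l r, lam * (x * (1 - x)) ≤ 1) :
    MonotoneOn (fun x : ℝ => log x - log (1 - x) - lam * x) (Icc l r) := by
  rcases le_or_gt l r with hlr | hlr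
  swap
  · intro x hx y hy _
    exact absurd (hx.1.trans hx.2) (not_le.mpr hlr)
  have hmem : ∀ x ∈ Icc l r, 0 < x ∧ x < 1 := fun x hx =>
    ⟨hl.trans_le hx.1, lt_of_le_of_lt hx.2 hr⟩
  apply monotoneOn_of_deriv_nonneg (convex_Icc l r)
  · intro x hx
    obtain ⟨hx0, hx1⟩ := hmem x hx
    exact (psi_deriv lam x hx0 hx1).continuousAt.continuousWithinAt
  · intro x hx
    rw [interior_Icc] at hx
    obtain ⟨hx0, hx1⟩ := hmem x (Ioo_subset_Icc_self hx)
    exact (psi_deriv lam x hx0 hx1).differentiableAt.differentiableWithinAt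
  · intro x hx
    rw [interior_Icc] at hx
    obtain ⟨hx0, hx1⟩ := hmem x (Ioo_subset_Icc_self hx)
    rw [(psi_deriv lam x hx0 hx1).deriv]
    have h1 : 0 < x * (1 - x) := mul_pos hx0 (by linarith)
    have h2 := hb x (Ioo_subset_Icc_self hx)
    have h3 : lam ≤ 1 / (x * (1 - x)) := (le_div_iff₀ h1).mpr h2
    have h4 : 1 / (x * (1 - x)) = 1 / x + 1 / (1 - x) := by
      have hne1 : x ≠ 0 := hx0.ne'
      have hne2 : (1:ℝ) - x ≠ 0 := by intro h; nlinarith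
      field_simp
      ring
    linarith [h3, h4.symm ▸ h3]

lemma core (a b lam : ℝ) (hb : b ∈ Ioo (0:ℝ) 1) (ha : a ∈ Icc (0:ℝ) 1) (hlam : 0 ≤ lam)
    (hbound : ∀ x, min a b ≤ x → x ≤ max a b → lam * (x * (1 - x)) ≤ 1) :
    lam / 2 * (a - b) ^ 2 ≤ klBerR a b := by
  obtain ⟨hb0, hb1⟩ := hb
  obtain ⟨ha0, ha1⟩ := ha
  rw [klBerR_eq a b hb0.ne' (by linarith)]
  set G : ℝ → ℝ := fun x => Fkl b x - lam / 2 * (x - b) ^ 2 with hGdef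
  have hGcont : Continuous G := by
    exact (Fkl_cont b).sub (by continuity)
  have hGb : G b = 0 := by
    simp [hGdef, Fkl]
  have hGderiv : ∀ x, 0 < x → x < 1 →
      HasDerivAt G (log x - log (1 - x) - log b + log (1 - b) - lam * (x - b)) x := by
    intro x hx0 hx1
    have h2 : HasDerivAt (fun y : ℝ => lam / 2 * (y - b) ^ 2) (lam * (x - b)) x := by
      have hh : HasDerivAt (fun y : ℝ => (y - b) ^ 2) (2 * (x - b) ^ 1 * 1) x := by
        exact (((hasDerivAt_id x).sub_const b).pow 2)
      have := hh.const_mul (lam / 2)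
      refine this.congr_deriv ?_
      ring
    exact (Fkl_deriv b x hx0 hx1).sub h2
  have key : 0 ≤ G a := by
    rcases le_total b a with hba | hab
    · have mono : MonotoneOn G (Icc b a) := by
        apply monotoneOn_of_deriv_nonneg (convex_Icc b a) hGcont.continuousOn
        · intro x hx
          rw [interior_Icc] at hx
          have hx0 : 0 < x := hb0.trans hx.1
          have hx1 : x < 1 := lt_of_lt_of_le hx.2 ha1
          exact (hGderiv x hx0 hx1).differentiableAt.differentiableWithinAt
        · intro x hx
          rw [interior_Icc] at hx
          have hx0 : 0 < x := hb0.trans hx.1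
          have hx1 : x < 1 := lt_of_lt_of_le hx.2 ha1
          rw [(hGderiv x hx0 hx1).deriv]
          have hmono := psi_mono lam b x hb0 hx1 (by
            intro y hy
            exact hbound y (le_trans (min_le_right a b) hy.1)
              (le_trans (hy.2.trans hx.2.le) (le_max_left a b)))
          have := hmono (left_mem_Icc.mpr hx.1.le) (right_mem_Icc.mpr hx.1.le) hx.1.le
          simp only at this
          linarith
      have h := mono (left_mem_Icc.mpr hba) (right_mem_Icc.mpr hba) hba
      linarith [hGb ▸ h]
    · have anti : AntitoneOn G (Icc a b) := by
        apply antitoneOn_of_deriv_nonpos (convex_Icc a b) hGcont.continuousOn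
        · intro x hx
          rw [interior_Icc] at hx
          have hx0 : 0 < x := lt_of_le_of_lt ha0 hx.1
          have hx1 : x < 1 := hx.2.trans hb1
          exact (hGderiv x hx0 hx1).differentiableAt.differentiableWithinAt
        · intro x hx
          rw [interior_Icc] at hx
          have hx0 : 0 < x := lt_of_le_of_lt ha0 hx.1
          have hx1 : x < 1 := hx.2.trans hb1
          rw [(hGderiv x hx0 hx1).deriv]
          have hmono := psi_mono lam x b hx0 hb1 (by
            intro y hy
            exact hbound y (le_trans (min_le_left a b) (hx.1.le.trans hy.1))
              (le_trans hy.2 (le_max_right a b)))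
          have := hmono (left_mem_Icc.mpr hx.2.le) (right_mem_Icc.mpr hx.2.le) hx.2.le
          simp only at this
          linarith
      have h := anti (left_mem_Icc.mpr hab) (right_mem_Icc.mpr hab) hab
      linarith [hGb ▸ h]
  simp only [hGdef] at key
  linarith

theorem kl_scaling_quadratic (c p q : ℝ) (hc : c ∈ Set.Icc (0 : ℝ) 1)
    (hp : p ∈ Set.Icc (0 : ℝ) 1) (hq : q ∈ Set.Icc (0 : ℝ) 1) :
    ((2 * c * max c (1 - max p q) * (p - q) ^ 2 : ℝ) : EReal) ≤ klBer (c * p) (c * q) := by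
  obtain ⟨hc0, hc1⟩ := hc
  obtain ⟨hp0, hp1⟩ := hp
  obtain ⟨hq0, hq1⟩ := hq
  by_cases htop : (c * q = 0 ∧ c * p ≠ 0) ∨ (c * q = 1 ∧ c * p ≠ 1)
  · rw [klBer, if_pos htop]
    exact le_top
  · rw [klBer, if_neg htop]
    rw [EReal.coe_le_coe_iff]
    show 2 * c * max c (1 - max p q) * (p - q) ^ 2 ≤ klBerR (c * p) (c * q)
    push_neg at htop
    obtain ⟨h0, h1⟩ := htop
    rcases eq_or_ne (c * q) 0 with hcq0 | hcq0
    · have hcp0 : c * p = 0 := h0 hcq0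
      rw [hcp0, hcq0]
      have hkl : klBerR 0 0 = 0 := by simp [klBerR]
      rw [hkl]
      rcases mul_eq_zero.mp hcq0 with hcz | hqz
      · simp [hcz]
      · rcases mul_eq_zero.mp hcp0 with hcz | hpz
        · simp [hcz]
        · rw [hpz, hqz]; norm_num
    · rcases eq_or_ne (c * q) 1 with hcq1 | hcq1
      · have hq1' : q = 1 := by nlinarith
        have hc1' : c = 1 := by nlinarith
        have hcp1 : c * p = 1 := h1 hcq1
        have hp1' : p = 1 := by nlinarith
        subst hq1' hc1' hp1'
        norm_num [klBerR]
      · have hcqpos : 0 < c * q := lt_of_le_of_ne (mul_nonneg hc0 hq0) (Ne.symm hcq0)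
        have hcqlt1 : c * q < 1 := lt_of_le_of_ne (by nlinarith) hcq1
        have hcpos : 0 < c := lt_of_le_of_ne hc0 (by rintro rfl; simp at hcqpos)
        have hcp_mem : c * p ∈ Icc (0:ℝ) 1 := ⟨mul_nonneg hc0 hp0, by nlinarith⟩
        have hcq_mem : c * q ∈ Ioo (0:ℝ) 1 := ⟨hcqpos, hcqlt1⟩
        rcases le_total (1 - max p q) c with hM | hM
        · rw [max_eq_left hM]
          have hcore := core (c * p) (c * q) 4 hcq_mem hcp_mem (by norm_num)
            (fun x _ _ => by nlinarith [sq_nonneg (2 * x - 1)])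
          calc 2 * c * c * (p - q) ^ 2 = 4 / 2 * (c * p - c * q) ^ 2 := by ring
            _ ≤ klBerR (c * p) (c * q) := hcore
        · rw [max_eq_right hM]
          by_cases hpq : p = q
          · have hcore := core (c * p) (c * q) 0 hcq_mem hcp_mem le_rfl
              (fun x _ _ => by norm_num)
            rw [hpq]
            rw [hpq] at hcore
            simpa using hcore
          · have hmpos : 0 < max p q := by
              rcases lt_or_ge 0 (max p q) with h | h
              · exact h
              · exfalso; apply hpq
                have h1' := le_max_left p q
                have h2' := le_max_right p q
                linarith
            have hcm : 0 < c * max p q := mul_pos hcpos hmpos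
            have hcmle1 : c * max p q ≤ 1 := by
              have := max_le hp1 hq1
              nlinarith
            have hcore := core (c * p) (c * q) (1 / (c * max p q)) hcq_mem hcp_mem
              (by positivity) ?_
            · have heq : 1 / (c * max p q) / 2 * (c * p - c * q) ^ 2
                  = c * (p - q) ^ 2 / (2 * max p q) := by
                field_simp
              rw [heq] at hcore
              have hle : 2 * c * (1 - max p q) * (p - q) ^ 2
                  ≤ c * (p - q) ^ 2 / (2 * max p q) := by
                rw [le_div_iff₀ (by positivity)]
                nlinarith [mul_nonneg (mul_nonneg hcpos.le (sq_nonneg (p - q)))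
                  (sq_nonneg (2 * max p q - 1))]
              linarith
            · intro x hx1 hx2
              have hxle : x ≤ c * max p q := by
                refine hx2.trans (max_le ?_ ?_)
                · exact mul_le_mul_of_nonneg_left (le_max_left p q) hc0
                · exact mul_le_mul_of_nonneg_left (le_max_right p q) hc0
              have hx0 : 0 ≤ x :=
                le_trans (le_min (mul_nonneg hc0 hp0) (mul_nonneg hc0 hq0)) hx1
              rw [div_mul_eq_mul_div, div_le_one hcm]
              nlinarith
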